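/- Every tree T in the family 𝒯(3) satisfies iso(T−S) ≤ (3/2)|S| for all S ⊆ V(T). -/

import Mathlib

open SimpleGraph Sum Finset

/-- The number of isolated vertices of `G - S` (vertices outside `S` all of whose
neighbors in `G` lie in `S`). -/
noncomputable def isoNum {V : Type*} (G : SimpleGraph V) (S : Set V) : ℕ :=
  {v : V | v ∉ S ∧ ∀ w : V, G.Adj v w → w ∈ S}.ncard

/-- Degree of a vertex, as the `ncard` of its neighbor set. -/
noncomputable def ndeg {V : Type*} (G : SimpleGraph V) (v : V) : ℕ :=
  (G.neighborSet v).ncard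

/-- Vertex set of the tree `T_R` obtained from a `{1,3}`-tree `R`: the vertices of `R`,
one subdivision vertex for each edge of `R`, and one new pendant vertex for each leaf of `R`. -/
def T3Vert {V : Type*} (R : SimpleGraph V) : Type _ :=
  V ⊕ (↥R.edgeSet ⊕ {v : V // ndeg R v = 1})

/-- The tree `T_R` obtained from `R` by subdividing every edge once and attaching a new
pendant edge (with a new endpoint) at every leaf of `R`. -/
def T3 {V : Type*} (R : SimpleGraph V) : SimpleGraph (T3Vert R) :=
  SimpleGraph.fromRel (fun a b =>
    match a, b with
    | Sum.inl v, Sum.inr (Sum.inl e) => v ∈ (e : Sym2 V)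
    | Sum.inl v, Sum.inr (Sum.inr w) => v = (w : V)
    | _, _ => False)

section Aux
variable {V : Type*} {R : SimpleGraph V}

lemma t3_adj_inl_e (v : V) (e : ↥R.edgeSet) :
    (T3 R).Adj (inl v) (inr (inl e)) ↔ v ∈ (e : Sym2 V) :=
  ⟨fun h => h.2.elim id False.elim, fun h => ⟨fun h' => (by cases h'), Or.inl h⟩⟩

lemma t3_adj_inl_pend (v : V) (w : {v : V // ndeg R v = 1}) :
    (T3 R).Adj (inl v) (inr (inr w)) ↔ v = (w : V) :=
  ⟨fun h => h.2.elim id False.elim, fun h => ⟨fun h' => (by cases h'), Or.inl h⟩⟩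

lemma t3_adj_inl_inl (v w : V) : ¬ (T3 R).Adj (inl v) (inl w) := fun h => h.2.elim id id

lemma t3_adj_inr_inr (a b : ↥R.edgeSet ⊕ {v : V // ndeg R v = 1}) :
    ¬ (T3 R).Adj (inr a) (inr b) := by
  cases a <;> cases b <;> exact fun h => h.2.elim id id

lemma hInc [DecidableEq V] (a : V) :
    ({e : ↥R.edgeSet | a ∈ (e : Sym2 V)}).ncard = ndeg R a := by
  rw [ndeg, ← Nat.card_coe_set_eq, ← Nat.card_coe_set_eq]
  exact Nat.card_congr ((Equiv.subtypeSubtypeEquivSubtypeInter _ _).trans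
    (R.incidenceSetEquivNeighborSet a))

lemma nbhd_inl (a : V) : (T3 R).neighborSet (inl a) =
    Set.image (β := T3Vert R) (fun e => (inr (inl e) : T3Vert R)) {e : ↥R.edgeSet | a ∈ (e : Sym2 V)} ∪
    Set.image (β := T3Vert R) (fun w => (inr (inr w) : T3Vert R)) {w : {v : V // ndeg R v = 1} | a = (w : V)} := by
  ext x
  rcases x with v | e | w
  · change (T3 R).Adj _ _ ↔ (∃ e, _ ∧ _) ∨ (∃ w, _ ∧ _)
    constructor
    · exact fun h => absurd h (t3_adj_inl_inl a v)
    · rintro (⟨e', _, heq⟩ | ⟨w', _, heq⟩)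
      · cases heq
      · cases heq
  · change (T3 R).Adj _ _ ↔ (∃ e, _ ∧ _) ∨ (∃ w, _ ∧ _)
    refine (t3_adj_inl_e a e).trans ?_
    constructor
    · exact fun h => Or.inl ⟨e, h, rfl⟩
    · rintro (⟨e', h, heq⟩ | ⟨w', _, heq⟩)
      · obtain rfl : e' = e := inl_injective (inr_injective heq); exact h
      · cases heq
  · change (T3 R).Adj _ _ ↔ (∃ e, _ ∧ _) ∨ (∃ w, _ ∧ _)
    refine (t3_adj_inl_pend a w).trans ?_
    constructor
    · exact fun h => Or.inr ⟨w, h, rfl⟩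
    · rintro (⟨e', _, heq⟩ | ⟨w', h, heq⟩)
      · cases heq
      · obtain rfl : w' = w := inr_injective (inr_injective heq); exact h

lemma nbhd_sub (e : ↥R.edgeSet) :
    (T3 R).neighborSet (inr (inl e)) =
      Set.image (β := T3Vert R) (fun v => (inl v : T3Vert R)) {v | v ∈ (e : Sym2 V)} := by
  ext x
  rcases x with v | f | w
  · change (T3 R).Adj _ _ ↔ ∃ v', _ ∧ _
    refine ((T3 R).adj_comm _ _).trans ((t3_adj_inl_e _ _).trans ?_)
    constructor
    · exact fun h => ⟨v, h, rfl⟩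
    · rintro ⟨v', h, heq⟩; obtain rfl : v' = v := inl_injective heq; exact h
  · change (T3 R).Adj _ _ ↔ ∃ v', _ ∧ _
    constructor
    · exact fun h => absurd h (t3_adj_inr_inr _ _)
    · rintro ⟨v', _, heq⟩; cases heq
  · change (T3 R).Adj _ _ ↔ ∃ v', _ ∧ _
    constructor
    · exact fun h => absurd h (t3_adj_inr_inr _ _)
    · rintro ⟨v', _, heq⟩; cases heq

lemma nbhd_pend (w : {v : V // ndeg R v = 1}) :
    (T3 R).neighborSet (inr (inr w)) = @singleton (T3Vert R) (Set (T3Vert R)) _ (inl (w : V)) := by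
  ext x
  rcases x with v | f | w'
  · change (T3 R).Adj _ _ ↔ _ = _
    refine ((T3 R).adj_comm _ _).trans ((t3_adj_inl_pend _ _).trans ?_)
    constructor
    · rintro rfl; rfl
    · intro h; exact inl_injective h ▸ rfl
  · change (T3 R).Adj _ _ ↔ _ = _
    constructor
    · exact fun h => absurd h (t3_adj_inr_inr _ _)
    · intro h; cases h
  · change (T3 R).Adj _ _ ↔ _ = _
    constructor
    · exact fun h => absurd h (t3_adj_inr_inr _ _)
    · intro h; cases h

lemma d_inl [Finite V] [DecidableEq V] (a : V) :
    ((T3 R).neighborSet (inl a)).ncard = ndeg R a + (if ndeg R a = 1 then 1 else 0) := by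
  have : Finite (T3Vert R) := by unfold T3Vert; exact inferInstance
  rw [nbhd_inl, Set.ncard_union_eq ?_ (Set.toFinite _) (Set.toFinite _)]
  · congr 1
    · refine (Set.ncard_image_of_injective _
        (fun x y h => inl_injective (inr_injective h))).trans ?_
      exact hInc a
    · refine (Set.ncard_image_of_injective _
        (fun x y h => inr_injective (inr_injective h))).trans ?_
      split_ifs with h1
      · rw [show {w : {v : V // ndeg R v = 1} | a = (w : V)} = {⟨a, h1⟩} from ?_,
          Set.ncard_singleton]
        ext w; simp [Subtype.ext_iff, eq_comm]
      · rw [show {w : {v : V // ndeg R v = 1} | a = (w : V)} = ∅ from ?_, Set.ncard_empty]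
        ext w; simp only [Set.mem_setOf_eq, Set.mem_empty_iff_false, iff_false]
        rintro rfl; exact h1 w.2
  · rw [Set.disjoint_left]; rintro x ⟨e, -, rfl⟩ ⟨w', -, h⟩
    cases h

lemma d_sub (e : ↥R.edgeSet) :
    ((T3 R).neighborSet (inr (inl e))).ncard = 2 := by
  rw [nbhd_sub]; refine (Set.ncard_image_of_injective _ (fun x y h => inl_injective h)).trans ?_
  obtain ⟨q, he⟩ := e
  induction q using Sym2.ind with
  | _ x y =>
    have hadj : R.Adj x y := R.mem_edgeSet.mp he
    have hset : {v | v ∈ ((⟨s(x,y), he⟩ : ↥R.edgeSet) : Sym2 V)} = {x, y} := by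
      ext v; simp [Sym2.mem_iff]
    rw [hset, Set.ncard_pair hadj.ne]

lemma d_pend (w : {v : V // ndeg R v = 1}) :
    ((T3 R).neighborSet (inr (inr w))).ncard = 1 := by
  rw [nbhd_pend]; exact Set.ncard_singleton _

end Aux

/-- Every tree `T_R ∈ 𝒯(3)` satisfies `iso(T - S) ≤ (3/2)|S|` for all `S ⊆ V(T)`. -/
theorem stmt14 (m : ℕ) (R : SimpleGraph (Fin m)) (hR : R.IsTree)
    (hdegR : ∀ v, ndeg R v = 1 ∨ ndeg R v = 3) :
    ∀ S : Set (T3Vert R), (isoNum (T3 R) S : ℚ) ≤ 3/2 * S.ncard := by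
  classical
  intro S
  haveI : Finite (T3Vert R) := by unfold T3Vert; exact inferInstance
  haveI : Fintype (T3Vert R) := Fintype.ofFinite _
  set I : Set (T3Vert R) := {v | v ∉ S ∧ ∀ w, (T3 R).Adj v w → w ∈ S} with hI
  have hIfin : I.Finite := Set.toFinite I
  have hSfin : S.Finite := Set.toFinite S
  set Is := hIfin.toFinset with hIs
  set Ss := hSfin.toFinset with hSs
  set d : T3Vert R → ℕ := fun v => ((T3 R).neighborSet v).ncard with hd
  have hdfilt : ∀ v, d v = (univ.filter ((T3 R).Adj v)).card := by
    intro v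
    have : (T3 R).neighborSet v = ↑(univ.filter ((T3 R).Adj v)) := by
      ext w; simp [mem_neighborSet]
    show ((T3 R).neighborSet v).ncard = _
    rw [this, Set.ncard_coe_finset]
  have hdinl : ∀ a : Fin m, d (inl a) = ndeg R a + (if ndeg R a = 1 then 1 else 0) :=
    fun a => d_inl a
  have hd2 : ∀ a : Fin m, 2 ≤ d (inl a) ∧ d (inl a) ≤ 3 := by
    intro a
    rcases hdegR a with h | h <;> rw [hdinl a, h] <;> simp
  set P := Is.filter (fun x : T3Vert R => ∃ w, x = inr (inr w)) with hP
  have hmemP : ∀ x ∈ P, x ∈ Is ∧ ∃ w, x = inr (inr w) := fun x hx => Finset.mem_filter.mp hx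
  -- L1
  have hPsub : P ⊆ Is := Finset.filter_subset _ _
  have hsumP : ∑ v ∈ P, d v = P.card := by
    rw [Finset.sum_congr rfl (fun x hx => show d x = 1 from ?_), Finset.sum_const,
      smul_eq_mul, mul_one]
    obtain ⟨-, w, rfl⟩ := hmemP x hx
    exact d_pend w
  have hd2' : ∀ v ∈ Is \ P, 2 ≤ d v := by
    intro v hv
    obtain ⟨hvIs, hvP⟩ := Finset.mem_sdiff.mp hv
    rcases v with a | e | w
    · exact (hd2 a).1
    · exact le_of_eq (d_sub e).symm
    · exact absurd (Finset.mem_filter.mpr ⟨hvIs, w, rfl⟩) hvP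
  have L1 : 2 * Is.card ≤ (∑ v ∈ Is, d v) + P.card := by
    have h1 : ∑ _v ∈ Is \ P, 2 ≤ ∑ v ∈ Is \ P, d v := Finset.sum_le_sum hd2'
    have hsplit : (∑ v ∈ Is \ P, d v) + ∑ v ∈ P, d v = ∑ v ∈ Is, d v := Finset.sum_sdiff hPsub
    have hsplit2 : (∑ _v ∈ Is \ P, (2:ℕ)) + ∑ _v ∈ P, (2:ℕ) = ∑ _v ∈ Is, (2:ℕ) :=
      Finset.sum_sdiff hPsub
    have e1 : ∑ _v ∈ Is, (2:ℕ) = 2 * Is.card := by rw [Finset.sum_const, smul_eq_mul, mul_comm]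
    have e2 : ∑ _v ∈ P, (2:ℕ) = 2 * P.card := by rw [Finset.sum_const, smul_eq_mul, mul_comm]
    omega
  -- L2
  have hIsub : ∀ v ∈ Is, univ.filter ((T3 R).Adj v) = Ss.filter ((T3 R).Adj v) := by
    intro v hv
    have hvI : v ∈ I := (Set.Finite.mem_toFinset hIfin).mp hv
    ext w
    simp only [Finset.mem_filter, Finset.mem_univ, true_and, hSs, Set.Finite.mem_toFinset]
    exact ⟨fun h => ⟨hvI.2 w h, h⟩, And.right⟩
  have L2 : (∑ v ∈ Is, d v) ≤ ∑ s ∈ Ss, d s := by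
    calc ∑ v ∈ Is, d v = ∑ v ∈ Is, (Ss.filter ((T3 R).Adj v)).card :=
          Finset.sum_congr rfl fun v hv => by rw [hdfilt v, hIsub v hv]
      _ = ∑ v ∈ Is, ∑ s ∈ Ss, if (T3 R).Adj v s then 1 else 0 :=
          Finset.sum_congr rfl fun v _ => Finset.card_filter _ _
      _ = ∑ s ∈ Ss, ∑ v ∈ Is, if (T3 R).Adj v s then 1 else 0 := Finset.sum_comm
      _ = ∑ s ∈ Ss, (Is.filter ((T3 R).Adj s)).card := by
          refine Finset.sum_congr rfl fun s _ => ?_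
          rw [Finset.card_filter]
          exact Finset.sum_congr rfl fun v _ => by rw [adj_comm]
      _ ≤ ∑ s ∈ Ss, d s := Finset.sum_le_sum fun s _ => by
          rw [hdfilt s]
          exact Finset.card_le_card (Finset.filter_subset_filter _ (Finset.subset_univ _))
  -- L3
  set ell : T3Vert R → T3Vert R :=
    Sum.elim inl (Sum.elim (fun e => inr (inl e)) (fun w => inl (w : Fin m))) with hell
  set Lf := P.image ell with hLf
  have hLcard : Lf.card = P.card := by
    refine Finset.card_image_of_injOn ?_
    rintro x hx y hy hxy
    obtain ⟨-, w, rfl⟩ := hmemP x (Finset.mem_coe.mp hx)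
    obtain ⟨-, w', rfl⟩ := hmemP y (Finset.mem_coe.mp hy)
    simp only [hell, Sum.elim_inr] at hxy
    exact congrArg _ (congrArg _ (Subtype.ext (inl_injective hxy)))
  have hLS : Lf ⊆ Ss := by
    intro x hx
    obtain ⟨p, hp, rfl⟩ := Finset.mem_image.mp hx
    obtain ⟨hpIs, w, rfl⟩ := hmemP p hp
    have hpI : (inr (inr w) : T3Vert R) ∈ I := (Set.Finite.mem_toFinset hIfin).mp hpIs
    have hadj : (T3 R).Adj (inr (inr w)) (inl (w : Fin m)) :=
      ((T3 R).adj_comm _ _).mp ((t3_adj_inl_pend _ w).mpr rfl)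
    have hmem : (inl (w : Fin m) : T3Vert R) ∈ S := hpI.2 _ hadj
    simp only [hell, Sum.elim_inr, hSs, Set.Finite.mem_toFinset]
    exact hmem
  have hd3 : ∀ v, d v ≤ 3 := by
    intro v
    rcases v with a | e | w
    · exact (hd2 a).2
    · rw [show d (inr (inl e)) = 2 from d_sub e]; omega
    · rw [show d (inr (inr w)) = 1 from d_pend w]; omega
  have hdLf : ∀ s ∈ Lf, d s ≤ 2 := by
    intro s hs
    obtain ⟨p, hp, rfl⟩ := Finset.mem_image.mp hs
    obtain ⟨-, w, rfl⟩ := hmemP p hp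
    simp only [hell, Sum.elim_inr]
    show d (inl (w : Fin m)) ≤ 2
    rw [hdinl, w.2]
    norm_num
  have L3 : (∑ s ∈ Ss, d s) + P.card ≤ 3 * Ss.card := by
    have b1 : ∑ s ∈ Ss \ Lf, d s ≤ ∑ _s ∈ Ss \ Lf, 3 := Finset.sum_le_sum fun s _ => hd3 s
    have b2 : ∑ s ∈ Lf, d s ≤ ∑ _s ∈ Lf, 2 := Finset.sum_le_sum hdLf
    have hsplit : (∑ s ∈ Ss \ Lf, d s) + ∑ s ∈ Lf, d s = ∑ s ∈ Ss, d s := Finset.sum_sdiff hLS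
    have hsplit3 : (∑ _s ∈ Ss \ Lf, (3:ℕ)) + ∑ _s ∈ Lf, (3:ℕ) = ∑ _s ∈ Ss, (3:ℕ) :=
      Finset.sum_sdiff hLS
    have e3 : ∑ _s ∈ Ss, (3:ℕ) = 3 * Ss.card := by rw [Finset.sum_const, smul_eq_mul, mul_comm]
    have e4 : ∑ _s ∈ Lf, (3:ℕ) = 3 * Lf.card := by rw [Finset.sum_const, smul_eq_mul, mul_comm]
    have e5 : ∑ _s ∈ Lf, (2:ℕ) = 2 * Lf.card := by rw [Finset.sum_const, smul_eq_mul, mul_comm]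
    omega
  have key : 2 * Is.card ≤ 3 * Ss.card := by omega
  have hiso : isoNum (T3 R) S = Is.card := by
    rw [show isoNum (T3 R) S = I.ncard from rfl, Set.ncard_eq_toFinset_card _ hIfin]
  have hSc : S.ncard = Ss.card := Set.ncard_eq_toFinset_card _ hSfin
  rw [hiso, hSc]
  have hq : ((2 : ℚ)) * Is.card ≤ 3 * Ss.card := by exact_mod_cast key
  linarith
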